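/- Let B be a finite set with |B| ≥ 5, and consider configurations x : ℤ → Bool × B. Define the partial shift s by s(x)(i) = ((x(i+1)).1, (x(i)).2), and for a ∈ Bool and an even permutation π of B define f_{a,π} by f_{a,π}(x)(i) = ((x(i)).1, π((x(i)).2)) if (x(i)).1 = a, and f_{a,π}(x)(i) = x(i) otherwise. Let G be the subgroup of the group of bijections of ℤ → Bool × B generated by s together with all the f_{a,π}. Then for every n ≥ 1, every set U of functions from {0, …, n−1} to Bool, and every even permutation π of B, the bijection f_{U,π} defined by f_{U,π}(x)(i) = ((x(i)).1, π((x(i)).2)) if the function j ↦ (x(i+j)).1 (for 0 ≤ j < n) belongs to U, and f_{U,π}(x)(i) = x(i) otherwise, belongs to G. -/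

import Mathlib

/-- A permutation of `ℤ → Bool × B` is the partial shift `s` if it shifts the first
(`Bool`) track and fixes the second (`B`) track. -/
def IsPartialShift {B : Type*} (σ : Equiv.Perm (ℤ → Bool × B)) : Prop :=
  ∀ (x : ℤ → Bool × B) (i : ℤ), σ x i = ((x (i + 1)).1, (x i).2)

/-- A permutation of `ℤ → Bool × B` is one of the maps `f_{a,π}` (`a ∈ Bool`, `π` an
even permutation of `B`) if it applies `π` cellwise on the second track exactly at the
cells whose first-track symbol equals `a`. -/
def IsSymbolMap {B : Type*} [Fintype B] [DecidableEq B]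
    (σ : Equiv.Perm (ℤ → Bool × B)) : Prop :=
  ∃ (a : Bool) (π : Equiv.Perm B), π ∈ alternatingGroup B ∧
    ∀ (x : ℤ → Bool × B) (i : ℤ),
      σ x i = if (x i).1 = a then ((x i).1, π ((x i).2)) else x i

set_option linter.unusedSectionVars false

namespace Stmt11Aux

open Equiv
open scoped commutatorElement

variable {B : Type*} [Fintype B] [DecidableEq B]

/-- first track -/
def tr (x : ℤ → Bool × B) : ℤ → Bool := fun i => (x i).1

/-- apply π on second track where condition holds on first track -/
def A (c : (ℤ → Bool) → ℤ → Bool) (π : Equiv.Perm B) (x : ℤ → Bool × B) :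
    ℤ → Bool × B :=
  fun i => ((x i).1, if c (tr x) i then π (x i).2 else (x i).2)

@[simp] lemma tr_A (c : (ℤ → Bool) → ℤ → Bool) (π : Equiv.Perm B)
    (x : ℤ → Bool × B) : tr (A c π x) = tr x := rfl

lemma A_A (c : (ℤ → Bool) → ℤ → Bool) (π ρ : Equiv.Perm B) (x : ℤ → Bool × B) :
    A c π (A c ρ x) = A c (π * ρ) x := by
  funext i
  simp only [A, tr_A]
  by_cases h : c (tr x) i <;> simp [h]

def Fc (c : (ℤ → Bool) → ℤ → Bool) (π : Equiv.Perm B) :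
    Equiv.Perm (ℤ → Bool × B) where
  toFun := A c π
  invFun := A c π⁻¹
  left_inv := fun x => by
    rw [A_A, inv_mul_cancel]
    funext i
    by_cases h : c (tr x) i <;> simp [A, h]
  right_inv := fun x => by
    rw [A_A, mul_inv_cancel]
    funext i
    by_cases h : c (tr x) i <;> simp [A, h]

@[simp] lemma Fc_apply (c : (ℤ → Bool) → ℤ → Bool) (π : Equiv.Perm B)
    (x : ℤ → Bool × B) : Fc c π x = A c π x := rfl

lemma Fc_mul (c : (ℤ → Bool) → ℤ → Bool) (π ρ : Equiv.Perm B) :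
    Fc c (π * ρ) = Fc c π * Fc c ρ := by
  refine Equiv.ext fun x => ?_
  simp [Equiv.Perm.mul_apply, A_A]

lemma Fc_one (c : (ℤ → Bool) → ℤ → Bool) : Fc c (1 : Equiv.Perm B) = 1 := by
  refine Equiv.ext fun x => funext fun i => ?_
  simp [A]

lemma Fc_inv (c : (ℤ → Bool) → ℤ → Bool) (π : Equiv.Perm B) :
    (Fc c π)⁻¹ = Fc c π⁻¹ := by
  rw [eq_comm, eq_inv_iff_mul_eq_one, ← Fc_mul, inv_mul_cancel, Fc_one]

lemma Fc_congr {c d : (ℤ → Bool) → ℤ → Bool} (h : c = d) (π : Equiv.Perm B) :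
    Fc c π = Fc d π := by rw [h]

lemma Fc_commutator (c d : (ℤ → Bool) → ℤ → Bool) (α β : Equiv.Perm B) :
    ⁅Fc c α, Fc d β⁆ = Fc (fun y i => c y i && d y i) ⁅α, β⁆ := by
  rw [commutatorElement_def, commutatorElement_def, Fc_inv, Fc_inv]
  refine Equiv.ext fun x => funext fun i => ?_
  simp only [Equiv.Perm.mul_apply, Fc_apply]
  by_cases hc : c (tr x) i <;> by_cases hd : d (tr x) i <;>
    simp [A, hc, hd, Equiv.Perm.mul_apply]

lemma Fc_union (c d : (ℤ → Bool) → ℤ → Bool)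
    (h : ∀ y i, c y i = true → d y i = false) (π : Equiv.Perm B) :
    Fc (fun y i => c y i || d y i) π = Fc c π * Fc d π := by
  refine Equiv.ext fun x => funext fun i => ?_
  simp only [Equiv.Perm.mul_apply, Fc_apply]
  by_cases hc : c (tr x) i
  · have hd := h _ _ hc
    simp [A, hc, hd]
  · simp [A, hc]

lemma Fc_false (π : Equiv.Perm B) :
    Fc (fun _ _ => false) π = 1 := by
  refine Equiv.ext fun x => funext fun i => ?_
  simp [A]

/-- the partial shift -/
def sh : Equiv.Perm (ℤ → Bool × B) where
  toFun x := fun i => ((x (i + 1)).1, (x i).2)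
  invFun x := fun i => ((x (i - 1)).1, (x i).2)
  left_inv x := by funext i; simp
  right_inv x := by funext i; simp

@[simp] lemma sh_apply (x : ℤ → Bool × B) (i : ℤ) :
    sh x i = ((x (i + 1)).1, (x i).2) := rfl

@[simp] lemma sh_inv_apply (x : ℤ → Bool × B) (i : ℤ) :
    (sh : Equiv.Perm (ℤ → Bool × B))⁻¹ x i = ((x (i - 1)).1, (x i).2) := rfl

lemma Fc_conj_sh (c : (ℤ → Bool) → ℤ → Bool) (π : Equiv.Perm B) :
    (sh : Equiv.Perm (ℤ → Bool × B))⁻¹ * Fc c π * sh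
      = Fc (fun y i => c (fun j => y (j + 1)) i) π := by
  have htr : ∀ x : ℤ → Bool × B, tr (sh x) = fun j => tr x (j + 1) := fun _ => rfl
  refine Equiv.ext fun x => funext fun i => ?_
  simp only [Equiv.Perm.mul_apply, Fc_apply, sh_inv_apply, A, htr, sh_apply,
    sub_add_cancel, tr]
  rfl

lemma alt_perfect (h5 : 5 ≤ Fintype.card B) :
    alternatingGroup B ≤ ⁅alternatingGroup B, alternatingGroup B⁆ := by
  have key : Subgroup.closure {σ : Perm B | σ.IsThreeCycle}
      ≤ ⁅alternatingGroup B, alternatingGroup B⁆ := by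
    refine (Subgroup.closure_le _).mpr ?_
    intro σ hσ
    have hmem : σ ∈ alternatingGroup B := hσ.mem_alternatingGroup
    set σ' : alternatingGroup B := ⟨σ, hmem⟩ with hσ'
    have hinv : Equiv.Perm.IsThreeCycle ((σ'⁻¹ : alternatingGroup B) : Perm B) := by
      simpa using hσ.inv
    have hconj : IsConj σ' σ'⁻¹ := alternatingGroup.isThreeCycle_isConj (by rwa [Nat.card_eq_fintype_card]) hσ hinv
    obtain ⟨ρ, hρ⟩ := isConj_iff.1 hconj
    have hρ' : (ρ : Perm B) * σ * (ρ : Perm B)⁻¹ = σ⁻¹ := by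
      have := congrArg (Subtype.val) hρ
      simpa using this
    have h1 : σ * σ * σ = 1 := by
      have h3 : σ ^ 3 = 1 := by
        rw [← hσ.orderOf]; exact pow_orderOf_eq_one σ
      rw [← h3]; rw [pow_succ, pow_succ, pow_one]
    have h2 : σ * σ = σ⁻¹ := eq_inv_of_mul_eq_one_left h1
    have hcomm : ⁅(ρ : Perm B), σ⁆ = σ := by
      rw [commutatorElement_def, hρ']
      calc σ⁻¹ * σ⁻¹ = (σ * σ) * (σ * σ) := by rw [h2]
        _ = σ * (σ * σ * σ) := by group
        _ = σ := by rw [h1, mul_one]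
    exact hcomm ▸ Subgroup.commutator_mem_commutator ρ.2 hmem
  intro σ hmem
  exact key (by rwa [Equiv.Perm.closure_three_cycles_eq_alternating])

/-- single-letter condition -/
def cLet (a : Bool) : (ℤ → Bool) → ℤ → Bool := fun y i => decide (y i = a)

/-- word condition -/
def cW {n : ℕ} (w : Fin n → Bool) : (ℤ → Bool) → ℤ → Bool :=
  fun y i => decide (∀ j : Fin n, y (i + ((j : ℕ) : ℤ)) = w j)

lemma isSymbolMap_Fc_cLet (a : Bool) (π : Equiv.Perm B)
    (hπ : π ∈ alternatingGroup B) : IsSymbolMap (Fc (cLet a) π) := by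
  refine ⟨a, π, hπ, fun x i => ?_⟩
  by_cases h : (x i).1 = a <;> simp [A, cLet, tr, h]

lemma sh_mem :
    (sh : Equiv.Perm (ℤ → Bool × B)) ∈ Subgroup.closure
      {τ : Equiv.Perm (ℤ → Bool × B) | IsPartialShift τ ∨ IsSymbolMap τ} :=
  Subgroup.subset_closure (Or.inl fun _ _ => rfl)

lemma word_mem (h5 : 5 ≤ Fintype.card B) :
    ∀ (n : ℕ) (w : Fin (n + 1) → Bool) (π : Equiv.Perm B),
      π ∈ alternatingGroup B →
      Fc (cW w) π ∈ Subgroup.closure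
        {τ : Equiv.Perm (ℤ → Bool × B) | IsPartialShift τ ∨ IsSymbolMap τ} := by
  intro n
  induction n with
  | zero =>
    intro w π hπ
    have hc : cW w = cLet (w 0) := by
      funext y i
      simp only [cW, cLet, decide_eq_decide]
      constructor
      · intro h; simpa using h 0
      · intro h j
        have hj : j = 0 := Fin.fin_one_eq_zero j
        subst hj; simpa using h
    rw [hc]
    exact Subgroup.subset_closure (Or.inr (isSymbolMap_Fc_cLet _ _ hπ))
  | succ n IH =>
    intro w π hπ
    set v : Fin (n + 1) → Bool := fun j => w j.succ with hv
    have hsplit : cW w = fun y i =>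
        cLet (w 0) y i && (fun y i => cW v (fun j => y (j + 1)) i) y i := by
      funext y i
      simp only [cW, cLet]
      rw [← Bool.decide_and, decide_eq_decide]
      rw [Fin.forall_fin_succ]
      constructor
      · rintro ⟨h0, h⟩
        refine ⟨by simpa using h0, fun j => ?_⟩
        have := h j
        simpa [hv, Fin.val_succ, add_assoc] using this
      · rintro ⟨h0, h⟩
        refine ⟨by simpa using h0, fun j => ?_⟩
        have := h j
        simpa [hv, Fin.val_succ, add_assoc] using this
    have hπ2 : π ∈ Subgroup.closure
        {g : Equiv.Perm B | ∃ g₁ ∈ alternatingGroup B,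
          ∃ g₂ ∈ alternatingGroup B, ⁅g₁, g₂⁆ = g} := by
      rw [← Subgroup.commutator_def]
      exact alt_perfect h5 hπ
    refine Subgroup.closure_induction
      (p := fun g _ => Fc (cW w) g ∈ Subgroup.closure
        {τ : Equiv.Perm (ℤ → Bool × B) | IsPartialShift τ ∨ IsSymbolMap τ})
      ?_ ?_ ?_ ?_ hπ2
    · rintro g ⟨g₁, hg₁, g₂, hg₂, rfl⟩
      rw [Fc_congr hsplit, ← Fc_commutator]
      have h1 : Fc (cLet (w 0)) g₁ ∈ Subgroup.closure
          {τ : Equiv.Perm (ℤ → Bool × B) | IsPartialShift τ ∨ IsSymbolMap τ} :=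
        Subgroup.subset_closure (Or.inr (isSymbolMap_Fc_cLet _ _ hg₁))
      have h2 : Fc (fun y i => cW v (fun j => y (j + 1)) i) g₂ ∈ Subgroup.closure
          {τ : Equiv.Perm (ℤ → Bool × B) | IsPartialShift τ ∨ IsSymbolMap τ} := by
        rw [← Fc_conj_sh]
        exact mul_mem (mul_mem (inv_mem sh_mem) (IH v g₂ hg₂)) sh_mem
      rw [commutatorElement_def]
      exact mul_mem (mul_mem (mul_mem h1 h2) (inv_mem h1)) (inv_mem h2)
    · show Fc (cW w) (1 : Equiv.Perm B) ∈ _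
      rw [Fc_one]; exact one_mem _
    · intro a b _ _ ha hb
      show Fc (cW w) (a * b) ∈ _
      rw [Fc_mul]; exact mul_mem ha hb
    · intro a _ ha
      show Fc (cW w) a⁻¹ ∈ _
      rw [← Fc_inv]; exact inv_mem ha

lemma finset_mem (h5 : 5 ≤ Fintype.card B) (n : ℕ)
    (t : Finset (Fin (n + 1) → Bool)) (π : Equiv.Perm B)
    (hπ : π ∈ alternatingGroup B) :
    Fc (fun y i => decide ((fun j : Fin (n + 1) => y (i + ((j : ℕ) : ℤ))) ∈ t)) π
      ∈ Subgroup.closure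
        {τ : Equiv.Perm (ℤ → Bool × B) | IsPartialShift τ ∨ IsSymbolMap τ} := by
  classical
  induction t using Finset.induction_on with
  | empty =>
    have hc : (fun (y : ℤ → Bool) (i : ℤ) =>
        decide ((fun j : Fin (n + 1) => y (i + ((j : ℕ) : ℤ)))
          ∈ (∅ : Finset (Fin (n + 1) → Bool)))) = fun _ _ => false := by
      funext y i; simp
    rw [Fc_congr hc, Fc_false]
    exact one_mem _
  | @insert w t hw IH =>
    have hc : (fun (y : ℤ → Bool) (i : ℤ) =>
        decide ((fun j : Fin (n + 1) => y (i + ((j : ℕ) : ℤ))) ∈ insert w t))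
        = fun y i => cW w y i ||
            decide ((fun j : Fin (n + 1) => y (i + ((j : ℕ) : ℤ))) ∈ t) := by
      funext y i
      simp only [cW]
      rw [← Bool.decide_or, decide_eq_decide]
      simp [Finset.mem_insert, funext_iff]
    have hdisj : ∀ (y : ℤ → Bool) (i : ℤ), cW w y i = true →
        decide ((fun j : Fin (n + 1) => y (i + ((j : ℕ) : ℤ))) ∈ t) = false := by
      intro y i hcw
      simp only [cW, decide_eq_true_eq] at hcw
      have hfe : (fun j : Fin (n + 1) => y (i + ((j : ℕ) : ℤ))) = w := funext hcw
      simp [hfe, hw]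
    rw [Fc_congr hc, Fc_union _ _ hdisj]
    exact mul_mem (word_mem h5 n w π hπ) IH

end Stmt11Aux

/-- Let `B` be finite with `|B| ≥ 5` and let `G` be the group of
bijections of `ℤ → Bool × B` generated by the partial shift `s` and the maps `f_{a,π}`.
Then for every `n ≥ 1`, every set `U` of length-`n` binary words, and every even
permutation `π` of `B`, the bijection `f_{U,π}`, which applies `π` at cell `i` of the
second track exactly when the first-track word read at positions `i, …, i+n−1` belongs
to `U`, belongs to `G`. -/
theorem stmt11 {B : Type*} [Fintype B] [DecidableEq B]
    (hB : 5 ≤ Fintype.card B)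
    (n : ℕ) (hn : 1 ≤ n) (U : Set (Fin n → Bool)) (π : Equiv.Perm B)
    (hπ : π ∈ alternatingGroup B)
    (σ : Equiv.Perm (ℤ → Bool × B))
    (hσ : ∀ (x : ℤ → Bool × B) (i : ℤ),
      ((fun j : Fin n => (x (i + ((j : ℕ) : ℤ))).1) ∈ U →
        σ x i = ((x i).1, π ((x i).2))) ∧
      ((fun j : Fin n => (x (i + ((j : ℕ) : ℤ))).1) ∉ U → σ x i = x i)) :
    σ ∈ Subgroup.closure
      {τ : Equiv.Perm (ℤ → Bool × B) | IsPartialShift τ ∨ IsSymbolMap τ} := by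
  classical
  open Stmt11Aux in
  obtain ⟨m, rfl⟩ : ∃ m, n = m + 1 := ⟨n - 1, (Nat.succ_pred_eq_of_pos hn).symm⟩
  have hU : U.Finite := Set.toFinite U
  set t : Finset (Fin (m + 1) → Bool) := hU.toFinset with ht
  have hσeq : σ = Fc
      (fun y i => decide ((fun j : Fin (m + 1) => y (i + ((j : ℕ) : ℤ))) ∈ t)) π := by
    refine Equiv.ext fun x => funext fun i => ?_
    obtain ⟨h1, h2⟩ := hσ x i
    by_cases h : (fun j : Fin (m + 1) => (x (i + ((j : ℕ) : ℤ))).1) ∈ U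
    · rw [h1 h]
      simp only [Fc_apply, A, tr, ht, Set.Finite.mem_toFinset, decide_eq_true_eq]
      simp [h]
    · rw [h2 h]
      simp only [Fc_apply, A, tr, ht, Set.Finite.mem_toFinset, decide_eq_true_eq]
      simp [h]
  rw [hσeq]
  exact finset_mem hB m t π hπ
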